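/- Second derivative of γ₃ at the vertical position: let b₁, b₃, I₁, I₃ > 0, m ≥ 0, B = diag(b₁², b₁², b₃²), I = diag(I₁, I₁, I₃). Let ω : ℝ → ℝ³ be differentiable and γ : ℝ → ℝ³ satisfy γ̇(t) = γ(t) × ω(t) with γ(t) ≠ 0, and set r(t) = −Bγ(t)/√⟨γ(t), Bγ(t)⟩ and M(t) = I ω(t) + m r(t) × (ω(t) × r(t)). If at some time t₀ one has γ(t₀) = (0, 0, ε) with ε ∈ {+1, −1}, then the second derivative of the third component γ₃ at t₀ equals −ε (M₁(t₀)² + M₂(t₀)²)/(I₁ + m b₃²)². -/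

import Mathlib

open scoped RealInnerProductSpace

noncomputable section

/-- ℝ³ with the standard inner product. -/
abbrev E3 : Type := EuclideanSpace ℝ (Fin 3)

/-- The vector (x, y, z) ∈ ℝ³. -/
def vec3 (x y z : ℝ) : E3 := (EuclideanSpace.equiv (Fin 3) ℝ).symm ![x, y, z]

/-- The cross product in ℝ³. -/
def cross3 (x y : E3) : E3 :=
  vec3 (x 1 * y 2 - x 2 * y 1) (x 2 * y 0 - x 0 * y 2) (x 0 * y 1 - x 1 * y 0)

/-- The diagonal operator diag(c₁, c₁, c₃) acting on ℝ³. -/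
def diagOp (c1 c3 : ℝ) (x : E3) : E3 := vec3 (c1 * x 0) (c1 * x 1) (c3 * x 2)

/-- The vector r(γ) = −Bγ/√⟨γ, Bγ⟩, where B = diag(b₁², b₁², b₃²). -/
def rvec (b1 b3 : ℝ) (γ : E3) : E3 :=
  (-(Real.sqrt ⟪γ, diagOp (b1 ^ 2) (b3 ^ 2) γ⟫)⁻¹) • diagOp (b1 ^ 2) (b3 ^ 2) γ

/-- The angular momentum w.r.t. the contact point: M = I ω + m r × (ω × r) with
I = diag(I₁, I₁, I₃) and r = r(γ). -/
def Mmom (b1 b3 I1 I3 m : ℝ) (γ ω : E3) : E3 :=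
  diagOp I1 I3 ω + m • cross3 (rvec b1 b3 γ) (cross3 ω (rvec b1 b3 γ))

/-- The differentiable curves (γ, ω), with γ of unit length, solve the nonholonomic rolling
system:  Ṁ = M × ω − m ṙ × (ω × r) + m g r × γ,  γ̇ = γ × ω,  where r = r(γ) and
M = I ω + m r × (ω × r). -/
def NonholonomicRolling (b1 b3 I1 I3 m g : ℝ) (γ ω : ℝ → E3) : Prop :=
  Differentiable ℝ γ ∧ Differentiable ℝ ω ∧ (∀ t, ‖γ t‖ = 1) ∧
  (∀ t, deriv (fun s => Mmom b1 b3 I1 I3 m (γ s) (ω s)) t =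
      cross3 (Mmom b1 b3 I1 I3 m (γ t) (ω t)) (ω t)
      - m • cross3 (deriv (fun s => rvec b1 b3 (γ s)) t) (cross3 (ω t) (rvec b1 b3 (γ t)))
      + (m * g) • cross3 (rvec b1 b3 (γ t)) (γ t)) ∧
  (∀ t, deriv γ t = cross3 (γ t) (ω t))

lemma vec3_app0 (x y z : ℝ) : vec3 x y z 0 = x := rfl
lemma vec3_app1 (x y z : ℝ) : vec3 x y z 1 = y := rfl
lemma vec3_app2 (x y z : ℝ) : vec3 x y z 2 = z := rfl

lemma hasDerivAt_proj {γ : ℝ → E3} (h : Differentiable ℝ γ) (i : Fin 3) (t : ℝ) :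
    HasDerivAt (fun s => γ s i) (deriv γ t i) t := by
  have := (EuclideanSpace.proj (𝕜 := ℝ) i).hasFDerivAt.comp_hasDerivAt t (h t).hasDerivAt
  exact this

/-- second derivative of γ₃ at the vertical position: if γ̇ = γ × ω with γ ≠ 0 and
γ(t₀) = (0, 0, ±1), then γ̈₃(t₀) = −ε (M₁(t₀)² + M₂(t₀)²)/(I₁ + m b₃²)², where
M = I ω + m r × (ω × r) and r = −Bγ/√⟨γ, Bγ⟩. -/
theorem second_derivative_at_vertical (b1 b3 I1 I3 m : ℝ)
    (hb1 : 0 < b1) (hb3 : 0 < b3) (hI1 : 0 < I1) (hI3 : 0 < I3) (hm : 0 ≤ m)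
    (γ ω : ℝ → E3) (hγd : Differentiable ℝ γ) (hωd : Differentiable ℝ ω)
    (hγne : ∀ t, γ t ≠ 0)
    (hγeq : ∀ t, deriv γ t = cross3 (γ t) (ω t))
    (t₀ ε : ℝ) (hε : ε = 1 ∨ ε = -1) (hγt₀ : γ t₀ = vec3 0 0 ε) :
    deriv (deriv fun t => γ t 2) t₀ =
      -ε * ((Mmom b1 b3 I1 I3 m (γ t₀) (ω t₀) 0) ^ 2
            + (Mmom b1 b3 I1 I3 m (γ t₀) (ω t₀) 1) ^ 2) / (I1 + m * b3 ^ 2) ^ 2 := by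
  have hε2 : ε ^ 2 = 1 := by rcases hε with h | h <;> rw [h] <;> norm_num
  -- first derivative of γ₃
  have hd3 : (deriv fun t => γ t 2) = fun t => γ t 0 * ω t 1 - γ t 1 * ω t 0 := by
    funext t
    have h := hasDerivAt_proj hγd 2 t
    rw [hγeq t] at h
    exact h.deriv
  rw [hd3]
  -- derivatives of the components at t₀
  have h0 : HasDerivAt (fun s => γ s 0) (γ t₀ 1 * ω t₀ 2 - γ t₀ 2 * ω t₀ 1) t₀ := by
    have h := hasDerivAt_proj hγd 0 t₀; rw [hγeq t₀] at h; exact h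
  have h1 : HasDerivAt (fun s => γ s 1) (γ t₀ 2 * ω t₀ 0 - γ t₀ 0 * ω t₀ 2) t₀ := by
    have h := hasDerivAt_proj hγd 1 t₀; rw [hγeq t₀] at h; exact h
  have w0 : HasDerivAt (fun s => ω s 0) (deriv ω t₀ 0) t₀ := hasDerivAt_proj hωd 0 t₀
  have w1 : HasDerivAt (fun s => ω s 1) (deriv ω t₀ 1) t₀ := hasDerivAt_proj hωd 1 t₀
  have H := ((h0.mul w1).sub (h1.mul w0)).deriv
  rw [show (fun t => γ t 0 * ω t 1 - γ t 1 * ω t 0) = ((fun s => γ s 0) * fun s => ω s 1) - (fun s => γ s 1) * fun s => ω s 0 from rfl, H]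
  have g0 : γ t₀ 0 = 0 := by rw [hγt₀]; rfl
  have g1 : γ t₀ 1 = 0 := by rw [hγt₀]; rfl
  have g2 : γ t₀ 2 = ε := by rw [hγt₀]; rfl
  -- the value of r at t₀
  have hsq : Real.sqrt ⟪γ t₀, diagOp (b1 ^ 2) (b3 ^ 2) (γ t₀)⟫ = b3 := by
    have hin : ⟪γ t₀, diagOp (b1 ^ 2) (b3 ^ 2) (γ t₀)⟫ = b3 ^ 2 := by
      rw [hγt₀]
      simp [diagOp, PiLp.inner_apply, Fin.sum_univ_three, vec3_app0, vec3_app1, vec3_app2]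
      nlinarith [hε2]
    rw [hin, Real.sqrt_sq hb3.le]
  have hr : rvec b1 b3 (γ t₀) = vec3 0 0 (-(b3 * ε)) := by
    simp only [rvec]
    rw [hsq, hγt₀]
    ext i
    fin_cases i <;>
      simp [diagOp, PiLp.smul_apply, vec3_app0, vec3_app1, vec3_app2, smul_eq_mul] <;>
      field_simp <;> ring
  have hM : ∀ i : Fin 3, i = 0 ∨ i = 1 →
      Mmom b1 b3 I1 I3 m (γ t₀) (ω t₀) i = (I1 + m * b3 ^ 2) * ω t₀ i := by
    intro i hi
    rcases hi with h | h <;> subst h <;>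
      simp only [Mmom, hr, cross3, diagOp, PiLp.add_apply, PiLp.smul_apply,
        vec3_app0, vec3_app1, vec3_app2, smul_eq_mul]
    · linear_combination m * b3 ^ 2 * ω t₀ 0 * hε2
    · linear_combination m * b3 ^ 2 * ω t₀ 1 * hε2
  rw [hM 0 (Or.inl rfl), hM 1 (Or.inr rfl), g0, g1, g2]
  have hpos : (0:ℝ) < I1 + m * b3 ^ 2 := by positivity
  field_simp
  ring
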